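/- Let σ > 0, ξ < 0, and let c be a real number with c < log(−σ/ξ). Then the integrated survival function of exGPD(σ, ξ) equals an incomplete Beta integral: ∫_c^{log(−σ/ξ)} (1 + ξ e^y/σ)^(−1/ξ) dy = ∫_0^{1 + ξ e^c/σ} t^(−1/ξ) (1 − t)^(−1) dt. -/

import Mathlib

/-- For `σ > 0`, `ξ < 0` and real `c < log(−σ/ξ)`, the integrated survival function
of exGPD(σ, ξ) equals the incomplete Beta integral
`∫_0^{1+ξe^c/σ} t^(−1/ξ)(1−t)^(−1) dt`. -/
theorem exGPD_integrated_survival_neg (σ ξ : ℝ) (hσ : 0 < σ) (hξ : ξ < 0) (c : ℝ)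
    (hc : c < Real.log (-σ / ξ)) :
    ∫ y in c..(Real.log (-σ / ξ)), (1 + ξ * Real.exp y / σ) ^ (-1 / ξ) =
      ∫ t in (0 : ℝ)..(1 + ξ * Real.exp c / σ), t ^ (-1 / ξ) * (1 - t)⁻¹ := by
  set L := Real.log (-σ / ξ) with hLdef
  set f : ℝ → ℝ := fun y => 1 + ξ * Real.exp y / σ with hf
  have hσξ : 0 < -σ / ξ := div_pos_of_neg_of_neg (by linarith) hξ
  have hexpL : Real.exp L = -σ / ξ := Real.exp_log hσξ
  have hfL : f L = 0 := by
    simp only [hf, hexpL]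
    field_simp
    rw [div_self hξ.ne]
    ring
  have hξinv : 0 < -1 / ξ := div_pos_of_neg_of_neg (by norm_num) hξ
  have key := intervalIntegral.integral_comp_smul_deriv'
    (f := f) (f' := fun y => ξ * Real.exp y / σ)
    (g := fun t => t ^ (-1 / ξ) * (1 - t)⁻¹) (a := c) (b := L)
    (fun x _ => by
      exact (((Real.hasDerivAt_exp x).const_mul ξ).div_const σ).const_add 1)
    (by fun_prop)
    (by
      intro t ht
      obtain ⟨y, _, rfl⟩ := ht
      have h1 : f y < 1 := by
        have : ξ * Real.exp y / σ < 0 :=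
          div_neg_of_neg_of_pos (mul_neg_of_neg_of_pos hξ (Real.exp_pos y)) hσ
        simp only [hf]; linarith
      exact (ContinuousAt.mul
        (Real.continuousAt_rpow_const _ _ (Or.inr hξinv.le))
        (ContinuousAt.inv₀ (by fun_prop) (by linarith))).continuousWithinAt)
  have heq : ∀ x : ℝ, (ξ * Real.exp x / σ) • ((fun t => t ^ (-1 / ξ) * (1 - t)⁻¹) ∘ f) x
      = -(f x ^ (-1 / ξ)) := by
    intro x
    have hne : ξ * Real.exp x / σ ≠ 0 := by
      have := mul_neg_of_neg_of_pos hξ (Real.exp_pos x)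
      exact div_ne_zero (by linarith) hσ.ne'
    have h1 : 1 - f x = -(ξ * Real.exp x / σ) := by simp only [hf]; ring
    simp only [Function.comp, smul_eq_mul, h1, inv_neg, mul_neg]
    rw [mul_comm (f x ^ (-1 / ξ)), mul_inv_cancel_left₀ hne]
  have key2 : ∫ y in c..L, -(f y ^ (-1 / ξ))
      = ∫ x in f c..f L, x ^ (-1 / ξ) * (1 - x)⁻¹ := by
    rw [← key]
    exact intervalIntegral.integral_congr fun x _ => (heq x).symm
  have this1 : ∫ y in c..L, f y ^ (-1 / ξ) = -∫ y in c..L, -(f y ^ (-1 / ξ)) := by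
    rw [intervalIntegral.integral_neg]; ring
  show ∫ y in c..L, f y ^ (-1 / ξ) = _
  rw [this1, key2, hfL, intervalIntegral.integral_symm, neg_neg]
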